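/- (Asymptotic optimality of the coupled DDM.) For each node k ∈ {1,…,n}, the law of (x_k(t) − βt)/√t, which is the centered Gaussian measure on ℝ with variance v_k(t)/t where v_k(t) = t/n + Σ_{p=2}^n ((1 − e^{−2λ_p t})/(2λ_p))·(u_k⁽ᵖ⁾)², converges weakly as t → ∞ to the centered Gaussian measure on ℝ with variance 1/n, which is the law of (x_cen(t) − βt)/√t for the centralized drift-diffusion model. -/

import Mathlib

open Finset Filter Matrix MeasureTheory ProbabilityTheory
open scoped NNReal ENNReal

open OmegaCompletePartialOrder in
/-- Scott-topology convergence of gaussian probability measures whose variances converge to a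
nonzero limit. -/
lemma tendsto_gaussianReal_scott {v : ℝ → ℝ≥0} {w : ℝ≥0} (hw : w ≠ 0)
    (hv : Tendsto v atTop (nhds w)) :
    Tendsto (fun t => (⟨gaussianReal 0 (v t), inferInstance⟩ : ProbabilityMeasure ℝ))
      atTop (nhds (X := ProbabilityMeasure ℝ) (⟨gaussianReal 0 w, inferInstance⟩ : ProbabilityMeasure ℝ)) := by
  refine ProbabilityMeasure.tendsto_iff_forall_integral_tendsto.mpr ?_
  intro f
  have key : ∀ s : ℝ≥0, ∫ x, f x ∂(gaussianReal 0 s) =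
      ∫ x, f (Real.sqrt s * x) ∂(gaussianReal 0 1) := by
    intro s
    have h := gaussianReal_map_const_mul (μ := 0) (v := 1) (Real.sqrt s)
    have hs : NNReal.mk (Real.sqrt s ^ 2) (sq_nonneg _) * 1 = s := by
      ext; simp
    rw [mul_zero] at h
    erw [hs] at h
    rw [← h, integral_map (by fun_prop) f.continuous.aestronglyMeasurable]
  show Tendsto (fun t => ∫ x, f x ∂(gaussianReal 0 (v t))) atTop
    (nhds (∫ x, f x ∂(gaussianReal 0 w)))
  simp only [key]
  refine tendsto_integral_filter_of_dominated_convergence (fun _ => ‖f‖) ?_ ?_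
    (integrable_const _) ?_
  · exact Eventually.of_forall fun t =>
      (f.continuous.comp (continuous_const.mul continuous_id)).aestronglyMeasurable
  · exact Eventually.of_forall fun t => ae_of_all _ fun x => f.norm_coe_le_norm _
  · refine ae_of_all _ fun x => (f.continuous.tendsto _).comp ?_
    exact ((Real.continuous_sqrt.tendsto _).comp
      ((NNReal.continuous_coe.tendsto _).comp hv)).mul_const x

/-- **Asymptotic optimality of the coupled DDM.**
For each node `k`, the law of `(x_k(t) − βt)/√t`, i.e. the centered Gaussian measure with
variance `v_k(t)/t` where `v_k(t) = t/n + Σ_{p≠1} ((1 − e^{−2λ_p t})/(2λ_p))·(u_k⁽ᵖ⁾)²`,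
converges weakly as `t → ∞` to the centered Gaussian measure with variance `1/n`, the law of
`(x_cen(t) − βt)/√t` for the centralized DDM. -/
theorem coupledDDM_asymptotic_optimality
    (n : ℕ) [NeZero n] (hn : 2 ≤ n) (β : ℝ)
    (L : Matrix (Fin n) (Fin n) ℝ)
    (hsymm : L.IsSymm) (hpsd : L.PosSemidef)
    (hL1 : L *ᵥ (fun _ => (1 : ℝ)) = 0)
    (hker : ∀ v : Fin n → ℝ, L *ᵥ v = 0 → ∃ c : ℝ, v = fun _ => c)
    (lam : Fin n → ℝ) (u : Fin n → Fin n → ℝ)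
    (hlam0 : lam 0 = 0)
    (hlampos : ∀ p : Fin n, p ≠ 0 → 0 < lam p)
    (hmono : Monotone lam)
    (heig : ∀ p : Fin n, L *ᵥ u p = lam p • u p)
    (horth : ∀ p q : Fin n, ∑ k, u p k * u q k = if p = q then (1 : ℝ) else 0)
    (hu0 : u 0 = fun _ => 1 / Real.sqrt n)
    (k : Fin n) :
    Tendsto (fun t : ℝ =>
        (⟨gaussianReal 0 (((t / n + ∑ p ∈ Finset.univ.erase (0 : Fin n),
            (1 - Real.exp (-2 * lam p * t)) / (2 * lam p) * (u p k) ^ 2) / t).toNNReal),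
          inferInstance⟩ : ProbabilityMeasure ℝ))
      atTop
      (nhds (X := ProbabilityMeasure ℝ) (⟨gaussianReal 0 ((1 : ℝ≥0) / n), inferInstance⟩ : ProbabilityMeasure ℝ)) := by
  have hn0 : (n : ℝ) ≠ 0 := Nat.cast_ne_zero.mpr (NeZero.ne n)
  have hw : ((1 : ℝ≥0) / n) ≠ 0 :=
    div_ne_zero one_ne_zero (Nat.cast_ne_zero.mpr (NeZero.ne n))
  apply tendsto_gaussianReal_scott hw
  set S : ℝ → ℝ := fun t => ∑ p ∈ Finset.univ.erase (0 : Fin n),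
      (1 - Real.exp (-2 * lam p * t)) / (2 * lam p) * (u p k) ^ 2 with hS
  have hSt : Tendsto (fun t => S t / t) atTop (nhds 0) := by
    have heq : (fun t => S t / t) = fun t => ∑ p ∈ Finset.univ.erase (0 : Fin n),
        ((1 - Real.exp (-2 * lam p * t)) / (2 * lam p) * (u p k) ^ 2) / t := by
      funext t
      exact Finset.sum_div _ _ _
    rw [heq, show (0 : ℝ) = ∑ _p ∈ Finset.univ.erase (0 : Fin n), (0 : ℝ) by simp]
    refine tendsto_finset_sum _ fun p hp => ?_
    have hl : 0 < lam p := hlampos p (Finset.ne_of_mem_erase hp)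
    refine Tendsto.div_atTop (a := (1 - 0) / (2 * lam p) * (u p k) ^ 2) ?_ tendsto_id
    refine Tendsto.mul_const _ (Tendsto.div_const ?_ _)
    refine tendsto_const_nhds.sub ?_
    have h2 : Tendsto (fun t : ℝ => 2 * lam p * t) atTop atTop :=
      Tendsto.const_mul_atTop (by linarith) tendsto_id
    have h3 := Real.tendsto_exp_neg_atTop_nhds_zero.comp h2
    have h4 : (fun t : ℝ => Real.exp (-2 * lam p * t))
        = (fun x => Real.exp (-x)) ∘ (fun t : ℝ => 2 * lam p * t) := by
      funext t
      simp only [Function.comp]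
      ring_nf
    rw [h4]
    exact h3
  have hmain : Tendsto (fun t => (t / n + S t) / t) atTop (nhds (1 / n)) := by
    have h1 : Tendsto (fun t => 1 / (n : ℝ) + S t / t) atTop (nhds (1 / n)) := by
      simpa using tendsto_const_nhds.add hSt
    refine Tendsto.congr' ?_ h1
    filter_upwards [eventually_gt_atTop (0 : ℝ)] with t ht
    field_simp
  have hcast : ((1 : ℝ≥0) / n : ℝ≥0) = Real.toNNReal (1 / n) := by
    rw [Real.toNNReal_div zero_le_one]
    simp
  rw [hcast]
  exact (continuous_real_toNNReal.tendsto _).comp hmain
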